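/- Let W be a partial isometry on a complex Hilbert space with the property that the only partial isometry V satisfying V* W = 0 and V W* = 0 is V = 0. Then W is an isometry or a coisometry (i.e., W* W = I or W W* = I). -/

import Mathlib

open ContinuousLinearMap

local notation "⟪" x ", " y "⟫" => @inner ℂ _ _ x y

private lemma rank_one_adjoint {H : Type*} [NormedAddCommGroup H] [InnerProductSpace ℂ H]
    [CompleteSpace H] (x y : H) :
    adjoint ((innerSL ℂ x).smulRight y) = (innerSL ℂ y).smulRight x := by
  symm
  rw [ContinuousLinearMap.eq_adjoint_iff]
  intro u v
  simp only [ContinuousLinearMap.smulRight_apply, innerSL_apply_apply, inner_smul_left,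
    inner_smul_right, inner_conj_symm]
  ring

theorem stmt_12 {H : Type*} [NormedAddCommGroup H] [InnerProductSpace ℂ H]
    [CompleteSpace H] (W : H →L[ℂ] H) (hW : W * adjoint W * W = W)
    (hmax : ∀ V : H →L[ℂ] H, V * adjoint V * V = V →
        adjoint V * W = 0 → V * adjoint W = 0 → V = 0) :
    adjoint W * W = 1 ∨ W * adjoint W = 1 := by
  by_contra hcon
  push_neg at hcon
  obtain ⟨h1, h2⟩ := hcon
  -- get a nonzero vector u with W u = 0
  have hx0 : ∃ x0 : H, (adjoint W * W) x0 ≠ x0 := by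
    by_contra h
    push_neg at h
    exact h1 (by ext z; simpa using h z)
  obtain ⟨x0, hx0⟩ := hx0
  set u : H := x0 - (adjoint W * W) x0 with hu_def
  have hu_ne : u ≠ 0 := sub_ne_zero_of_ne (Ne.symm hx0)
  have hWu : W u = 0 := by
    have := congrArg (fun A : H →L[ℂ] H => A x0) hW
    simp only [mul_apply_eq_comp] at this ⊢
    simp [hu_def, mul_apply_eq_comp, this]
  -- adjoint version of hW
  have hW' : adjoint W * W * adjoint W = adjoint W := by
    have := congrArg adjoint hW
    simp only [← ContinuousLinearMap.star_eq_adjoint, star_mul, star_star, mul_assoc] at this ⊢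
    exact this
  -- get a nonzero vector v with W† v = 0
  have hy0 : ∃ y0 : H, (W * adjoint W) y0 ≠ y0 := by
    by_contra h
    push_neg at h
    exact h2 (by ext z; simpa using h z)
  obtain ⟨y0, hy0⟩ := hy0
  set v : H := y0 - (W * adjoint W) y0 with hv_def
  have hv_ne : v ≠ 0 := sub_ne_zero_of_ne (Ne.symm hy0)
  have hWv : adjoint W v = 0 := by
    have := congrArg (fun A : H →L[ℂ] H => A y0) hW'
    simp only [mul_apply_eq_comp] at this ⊢
    simp [hv_def, mul_apply_eq_comp, this]
  -- normalize
  set x : H := (‖u‖ : ℂ)⁻¹ • u with hx_def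
  set y : H := (‖v‖ : ℂ)⁻¹ • v with hy_def
  have hxnorm : ‖x‖ = 1 := by
    rw [hx_def, norm_smul]
    simp [norm_ne_zero_iff.mpr hu_ne]
  have hynorm : ‖y‖ = 1 := by
    rw [hy_def, norm_smul]
    simp [norm_ne_zero_iff.mpr hv_ne]
  have hWx : W x = 0 := by rw [hx_def, map_smul, hWu, smul_zero]
  have hWy : adjoint W y = 0 := by rw [hy_def, map_smul, hWv, smul_zero]
  have hxx : ⟪x, x⟫ = 1 := by
    rw [inner_self_eq_norm_sq_to_K, hxnorm]; norm_num
  have hyy : ⟪y, y⟫ = 1 := by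
    rw [inner_self_eq_norm_sq_to_K, hynorm]; norm_num
  -- the rank one partial isometry
  set V : H →L[ℂ] H := (innerSL ℂ x).smulRight y with hV_def
  have hVapp : ∀ z : H, V z = ⟪x, z⟫ • y := fun z => rfl
  have hVadj : ∀ z : H, adjoint V z = ⟪y, z⟫ • x := by
    intro z
    rw [hV_def, rank_one_adjoint]
    rfl
  have hVpi : V * adjoint V * V = V := by
    ext z
    simp only [mul_apply_eq_comp, hVapp, hVadj, inner_smul_right, hxx, hyy]
    simp
  have hVW : adjoint V * W = 0 := by
    ext z
    simp only [mul_apply_eq_comp, hVadj, zero_apply]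
    have : ⟪y, W z⟫ = ⟪adjoint W y, z⟫ := (ContinuousLinearMap.adjoint_inner_left W z y).symm
    rw [this, hWy, inner_zero_left, zero_smul]
  have hVW' : V * adjoint W = 0 := by
    ext z
    simp only [mul_apply_eq_comp, hVapp, zero_apply]
    have : ⟪x, adjoint W z⟫ = ⟪W x, z⟫ := ContinuousLinearMap.adjoint_inner_right W x z
    rw [this, hWx, inner_zero_left, zero_smul]
  have hVzero := hmax V hVpi hVW hVW'
  have : V x = 0 := by rw [hVzero]; rfl
  rw [hVapp, hxx, one_smul] at this
  exact (norm_ne_zero_iff.mp (by rw [hynorm]; norm_num)) this
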